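/- Let λ > 0 and let θ₁, θ₂ ∈ F_λ with θ₁ ≠ θ₂. Then the strict inequality g(θ₂) − g(θ₁) > ⟨∇g(θ₁), θ₂ − θ₁⟩ + (2/m)‖θ₂ − θ₁‖₂² holds, where ∇g(θ) is the gradient of g, given componentwise by [∇g(θ)]_i = (1/m) log(θ_i/(1 − θ_i)). -/

import Mathlib

/-- The dual objective `g(θ) = (1/m) Σ_i [θ_i log θ_i + (1−θ_i) log(1−θ_i)]`. -/
noncomputable def g (m : ℕ) (θ : Fin m → ℝ) : ℝ :=
  (1 / (m : ℝ)) * ∑ i, (θ i * Real.log (θ i) + (1 - θ i) * Real.log (1 - θ i))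

/-- The gradient of `g`, componentwise `(1/m) log(θ_i/(1−θ_i))`. -/
noncomputable def gradg (m : ℕ) (θ : Fin m → ℝ) : Fin m → ℝ :=
  fun i => (1 / (m : ℝ)) * Real.log (θ i / (1 - θ i))
/-- The dual feasible set `F_λ`: componentwise in `(0,1)`, `|⟨θ, x̄^j⟩| ≤ mλ` for all
columns `x̄^j = X j`, and `⟨θ, b⟩ = 0`. -/
def Feas (m p : ℕ) (X : Fin p → Fin m → ℝ) (b : Fin m → ℝ) (lam : ℝ) :
    Set (Fin m → ℝ) :=
  {θ | (∀ i, 0 < θ i ∧ θ i < 1) ∧ (∀ j, |∑ i, θ i * X j i| ≤ (m : ℝ) * lam) ∧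
    ∑ i, θ i * b i = 0}


open Real Set

noncomputable def phi (t : ℝ) : ℝ := t * Real.log t + (1 - t) * Real.log (1 - t)
noncomputable def Gf (t : ℝ) : ℝ := Real.log t - Real.log (1 - t) - 4 * t

lemma log_one_sub_hasDeriv {t : ℝ} (h1 : t < 1) :
    HasDerivAt (fun s : ℝ => Real.log (1 - s)) (-(1 / (1 - t))) t := by
  have h1t : (0:ℝ) < 1 - t := by linarith
  have h := (Real.hasDerivAt_log (ne_of_gt h1t)).comp t
    ((hasDerivAt_const t (1:ℝ)).sub (hasDerivAt_id t))
  simpa [one_div, Function.comp_def] using h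

lemma Gf_hasDeriv {t : ℝ} (h0 : 0 < t) (h1 : t < 1) :
    HasDerivAt Gf (1 / t + 1 / (1 - t) - 4) t := by
  have hl : HasDerivAt Real.log (1 / t) t := by
    simpa [one_div] using Real.hasDerivAt_log (ne_of_gt h0)
  have h4 : HasDerivAt (fun s : ℝ => 4 * s) 4 t := by
    simpa using (hasDerivAt_id t).const_mul (4:ℝ)
  have := (hl.sub (log_one_sub_hasDeriv h1)).sub h4
  refine this.congr_deriv (Eq.symm ?_)
  ring

lemma Gf_deriv_pos {t : ℝ} (h0 : 0 < t) (h1 : t < 1) (hne : t ≠ 1/2) :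
    0 < 1 / t + 1 / (1 - t) - 4 := by
  have h1t : (0:ℝ) < 1 - t := by linarith
  have key : 1 / t + 1 / (1 - t) - 4 = (1 - 2*t)^2 / (t * (1 - t)) := by
    field_simp; ring
  rw [key]
  apply div_pos
  · have : 1 - 2*t ≠ 0 := by intro h; apply hne; linarith
    positivity
  · positivity

lemma Gf_strictMonoOn : StrictMonoOn Gf (Ioo (0:ℝ) 1) := by
  have half : StrictMonoOn Gf (Ioc (0:ℝ) (1/2)) := by
    apply strictMonoOn_of_deriv_pos (convex_Ioc _ _)
    · intro t ht
      exact ((Gf_hasDeriv ht.1 (by linarith [ht.2])).continuousAt).continuousWithinAt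
    · intro t ht
      rw [interior_Ioc] at ht
      rw [(Gf_hasDeriv ht.1 (by linarith [ht.2])).deriv]
      exact Gf_deriv_pos ht.1 (by linarith [ht.2]) (ne_of_lt ht.2)
  have half2 : StrictMonoOn Gf (Ico (1/2:ℝ) 1) := by
    apply strictMonoOn_of_deriv_pos (convex_Ico _ _)
    · intro t ht
      exact ((Gf_hasDeriv (by linarith [ht.1]) ht.2).continuousAt).continuousWithinAt
    · intro t ht
      rw [interior_Ico] at ht
      exact (Gf_hasDeriv (by linarith [ht.1]) ht.2).deriv ▸
        Gf_deriv_pos (by linarith [ht.1]) ht.2 (ne_of_gt ht.1)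
  intro x hx y hy hxy
  rcases le_or_gt y (1/2) with h | h
  · exact half ⟨hx.1, by linarith⟩ ⟨hy.1, h⟩ hxy
  · rcases le_or_gt (1/2) x with h' | h'
    · exact half2 ⟨h', hx.2⟩ ⟨by linarith, hy.2⟩ hxy
    · calc Gf x < Gf (1/2) := half ⟨hx.1, le_of_lt h'⟩ ⟨by norm_num, le_refl _⟩ h'
        _ < Gf y := half2 ⟨le_refl _, by norm_num⟩ ⟨le_of_lt h, hy.2⟩ h

lemma phi_hasDeriv {t : ℝ} (h0 : 0 < t) (h1 : t < 1) :
    HasDerivAt phi (Real.log t - Real.log (1 - t)) t := by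
  have h1t : (0:ℝ) < 1 - t := by linarith
  have ha : HasDerivAt (fun s : ℝ => s * Real.log s) (Real.log t + 1) t := by
    have := (hasDerivAt_id t).mul (Real.hasDerivAt_log (ne_of_gt h0))
    refine this.congr_deriv (Eq.symm ?_)
    field_simp; simp only [id_eq]; ring
  have hb : HasDerivAt (fun s : ℝ => (1 - s) * Real.log (1 - s))
      (-Real.log (1 - t) - 1) t := by
    have := ((hasDerivAt_const t (1:ℝ)).sub (hasDerivAt_id t)).mul
      (log_one_sub_hasDeriv h1)
    refine this.congr_deriv (Eq.symm ?_)
    simp only [id_eq, Pi.sub_apply]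
    field_simp
    ring
  have := ha.add hb
  refine this.congr_deriv (Eq.symm ?_)
  ring

/-- Per-coordinate strict strong-convexity inequality. -/
lemma key_strict {a b : ℝ} (ha0 : 0 < a) (ha1 : a < 1) (hb0 : 0 < b) (hb1 : b < 1)
    (hab : a ≠ b) :
    Real.log (a / (1 - a)) * (b - a) + 2 * (b - a)^2 < phi b - phi a := by
  have ha1' : (0:ℝ) < 1 - a := by linarith
  have hlog : Real.log (a / (1 - a)) = Real.log a - Real.log (1 - a) :=
    Real.log_div (ne_of_gt ha0) (ne_of_gt ha1')
  set H : ℝ → ℝ := fun t => phi t - phi a -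
    (Real.log a - Real.log (1 - a)) * (t - a) - 2 * (t - a)^2 with hH
  have hHa : H a = 0 := by simp [hH]
  have hHd : ∀ t ∈ Ioo (0:ℝ) 1, HasDerivAt H (Gf t - Gf a) t := by
    intro t ht
    have h1 : HasDerivAt (fun s : ℝ => (Real.log a - Real.log (1 - a)) * (s - a))
        (Real.log a - Real.log (1 - a)) t := by
      simpa using ((hasDerivAt_id t).sub_const a).const_mul
        (Real.log a - Real.log (1 - a))
    have h2 : HasDerivAt (fun s : ℝ => 2 * (s - a)^2) (4 * (t - a)) t := by
      have := (((hasDerivAt_id t).sub_const a).pow 2).const_mul (2:ℝ)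
      refine this.congr_deriv (Eq.symm ?_)
      simp only [id_eq]
      push_cast
      ring
    have := (((phi_hasDeriv ht.1 ht.2).sub_const (phi a)).sub h1).sub h2
    refine this.congr_deriv (Eq.symm ?_)
    simp [Gf]
    ring
  suffices h : 0 < H b by
    rw [hlog]
    have : H b = phi b - phi a - (Real.log a - Real.log (1 - a)) * (b - a)
      - 2 * (b - a)^2 := rfl
    linarith [this ▸ h]
  rcases lt_or_gt_of_ne hab with hlt | hgt
  · -- a < b : H strictly increasing on [a,b]
    have hmono : StrictMonoOn H (Icc a b) := by
      apply strictMonoOn_of_deriv_pos (convex_Icc _ _)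
      · intro t ht
        exact ((hHd t ⟨lt_of_lt_of_le ha0 ht.1, lt_of_le_of_lt ht.2 hb1⟩).continuousAt).continuousWithinAt
      · intro t ht
        rw [interior_Icc] at ht
        have ht' : t ∈ Ioo (0:ℝ) 1 := ⟨lt_trans ha0 ht.1, lt_trans ht.2 hb1⟩
        rw [(hHd t ht').deriv]
        have := Gf_strictMonoOn ⟨ha0, ha1⟩ ht' ht.1
        linarith
    have := hmono ⟨le_refl a, le_of_lt hlt⟩ ⟨le_of_lt hlt, le_refl b⟩ hlt
    linarith [hHa ▸ this]
  · -- b < a : H strictly decreasing on [b,a]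
    have hmono : StrictAntiOn H (Icc b a) := by
      apply strictAntiOn_of_deriv_neg (convex_Icc _ _)
      · intro t ht
        exact ((hHd t ⟨lt_of_lt_of_le hb0 ht.1, lt_of_le_of_lt ht.2 ha1⟩).continuousAt).continuousWithinAt
      · intro t ht
        rw [interior_Icc] at ht
        have ht' : t ∈ Ioo (0:ℝ) 1 := ⟨lt_trans hb0 ht.1, lt_trans ht.2 ha1⟩
        rw [(hHd t ht').deriv]
        have := Gf_strictMonoOn ht' ⟨ha0, ha1⟩ ht.2
        linarith
    have := hmono ⟨le_refl b, le_of_lt hgt⟩ ⟨le_of_lt hgt, le_refl a⟩ hgt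
    linarith [hHa ▸ this]

lemma key_le {a b : ℝ} (ha0 : 0 < a) (ha1 : a < 1) (hb0 : 0 < b) (hb1 : b < 1) :
    Real.log (a / (1 - a)) * (b - a) + 2 * (b - a)^2 ≤ phi b - phi a := by
  rcases eq_or_ne a b with rfl | h
  · simp
  · exact le_of_lt (key_strict ha0 ha1 hb0 hb1 h)

/-- Lemma 1(b): for `λ > 0` and distinct `θ₁, θ₂ ∈ F_λ`, the strict inequality
`g(θ₂) − g(θ₁) > ⟨∇g(θ₁), θ₂ − θ₁⟩ + (2/m)‖θ₂ − θ₁‖₂²` holds. -/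
theorem slores_strong_convexity_strict (m p : ℕ) (hm : 1 ≤ m) (hp : 1 ≤ p)
    (X : Fin p → Fin m → ℝ) (b : Fin m → ℝ) (hb : ∀ i, b i = 1 ∨ b i = -1)
    (lam : ℝ) (hlam : 0 < lam) (θ₁ θ₂ : Fin m → ℝ)
    (h₁ : θ₁ ∈ Feas m p X b lam) (h₂ : θ₂ ∈ Feas m p X b lam) (hne : θ₁ ≠ θ₂) :
    g m θ₂ - g m θ₁ > (∑ i, gradg m θ₁ i * (θ₂ i - θ₁ i))
      + (2 / (m : ℝ)) * ∑ i, (θ₂ i - θ₁ i) ^ 2 := by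
  obtain ⟨hθ₁, -, -⟩ := h₁
  obtain ⟨hθ₂, -, -⟩ := h₂
  obtain ⟨i₀, hi₀⟩ := Function.ne_iff.mp hne
  have hmpos : (0:ℝ) < (m:ℝ) := by exact_mod_cast hm
  have hsum : ∑ i, (Real.log (θ₁ i / (1 - θ₁ i)) * (θ₂ i - θ₁ i)
        + 2 * (θ₂ i - θ₁ i)^2)
      < ∑ i, (phi (θ₂ i) - phi (θ₁ i)) := by
    apply Finset.sum_lt_sum
    · intro i _
      exact key_le (hθ₁ i).1 (hθ₁ i).2 (hθ₂ i).1 (hθ₂ i).2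
    · exact ⟨i₀, Finset.mem_univ _,
        key_strict (hθ₁ i₀).1 (hθ₁ i₀).2 (hθ₂ i₀).1 (hθ₂ i₀).2 hi₀⟩
  have h1m : (0:ℝ) < 1 / (m:ℝ) := by positivity
  have := mul_lt_mul_of_pos_left hsum h1m
  have hL : g m θ₂ - g m θ₁ = (1 / (m:ℝ)) * ∑ i, (phi (θ₂ i) - phi (θ₁ i)) := by
    simp only [g, phi, Finset.sum_sub_distrib, mul_sub]
  have hR : (∑ i, gradg m θ₁ i * (θ₂ i - θ₁ i))
      + (2 / (m : ℝ)) * ∑ i, (θ₂ i - θ₁ i) ^ 2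
      = (1 / (m:ℝ)) * ∑ i, (Real.log (θ₁ i / (1 - θ₁ i)) * (θ₂ i - θ₁ i)
        + 2 * (θ₂ i - θ₁ i)^2) := by
    simp only [gradg, Finset.sum_add_distrib, Finset.mul_sum]
    rw [mul_add, Finset.mul_sum, Finset.mul_sum]
    congr 1 <;> (apply Finset.sum_congr rfl; intro i _; ring)
  rw [hL, hR]
  exact this
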